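/- Let m ≥ 2 and suppose 𝔼[X] = 𝔼[Y] = 𝔼[Z] = 0. Then the reduced estimator c₄⁽ᵍ⁾ = [ (m+3)·\overline{XYZW} − m·(\overline{XYZ}·W̄ + \overline{XY}·\overline{ZW} + \overline{XZ}·\overline{YW} + \overline{XW}·\overline{YZ}) ] / (m−1) satisfies 𝔼[c₄⁽ᵍ⁾] = 𝔼[XYZW] − 𝔼[XYZ]𝔼[W] − 𝔼[XY]𝔼[ZW] − 𝔼[XZ]𝔼[YW] − 𝔼[XW]𝔼[YZ], which under the hypotheses equals the fourth multivariate cumulant C₄(x,y,z,w). -/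

import Mathlib

open MeasureTheory ProbabilityTheory
open scoped ENNReal

private lemma mem2_of_mem4 {Ω : Type*} [MeasurableSpace Ω] {μ : Measure Ω} [IsProbabilityMeasure μ]
    {f g : Ω → ℝ} (hf : MemLp f 4 μ) (hg : MemLp g 4 μ) :
    MemLp (fun ω => f ω * g ω) 2 μ := by
  have h : (1:ℝ≥0∞)/2 = 1/4 + 1/4 := by
    rw [ENNReal.div_add_div_same]
    rw [ENNReal.div_eq_div_iff] <;> norm_num
  haveI : ENNReal.HolderTriple 4 4 2 := ⟨by simpa [one_div] using h.symm⟩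
  exact hg.smul hf

private lemma int_of_mem2 {Ω : Type*} [MeasurableSpace Ω] {μ : Measure Ω} [IsProbabilityMeasure μ]
    {f g : Ω → ℝ} (hf : MemLp f 2 μ) (hg : MemLp g 2 μ) :
    Integrable (fun ω => f ω * g ω) μ := by
  have h : (1:ℝ≥0∞)/1 = 1/2 + 1/2 := by
    rw [ENNReal.div_add_div_same]
    rw [ENNReal.div_eq_div_iff] <;> norm_num
  haveI : ENNReal.HolderTriple 2 2 1 := ⟨by simpa [one_div] using h.symm⟩
  exact memLp_one_iff_integrable.mp (hg.smul hf)

private lemma key_sum {Ω : Type*} [MeasurableSpace Ω] {μ : Measure Ω} [IsProbabilityMeasure μ]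
    {m : ℕ} {a b : Fin m → Ω → ℝ} {D EA EB : ℝ}
    (hab : ∀ i, Integrable (fun ω => a i ω * b i ω) μ)
    (ha : ∀ i, Integrable (a i) μ) (hb : ∀ i, Integrable (b i) μ)
    (hind : ∀ i j, i ≠ j → IndepFun (a i) (b j) μ)
    (hD : ∀ i, ∫ ω, a i ω * b i ω ∂μ = D)
    (hA : ∀ i, ∫ ω, a i ω ∂μ = EA) (hB : ∀ j, ∫ ω, b j ω ∂μ = EB) :
    Integrable (fun ω => (∑ i, a i ω) * (∑ j, b j ω)) μ ∧
    ∫ ω, (∑ i, a i ω) * (∑ j, b j ω) ∂μ = m * D + (m * (m-1)) * (EA * EB) := by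
  have hint : ∀ i j, Integrable (fun ω => a i ω * b j ω) μ := by
    intro i j
    rcases eq_or_ne i j with rfl | h
    · exact hab i
    · exact (hind i j h).integrable_mul (ha i) (hb j)
  have hptw : ∀ ω, (∑ i, a i ω) * (∑ j, b j ω) = ∑ i, ∑ j, a i ω * b j ω := by
    intro ω; rw [Finset.sum_mul_sum]
  have hInt : Integrable (fun ω => ∑ i, ∑ j, a i ω * b j ω) μ :=
    integrable_finset_sum _ (fun i _ => integrable_finset_sum _ (fun j _ => hint i j))
  refine ⟨hInt.congr (Filter.Eventually.of_forall fun ω => (hptw ω).symm), ?_⟩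
  calc ∫ ω, (∑ i, a i ω) * (∑ j, b j ω) ∂μ
      = ∫ ω, ∑ i, ∑ j, a i ω * b j ω ∂μ :=
        integral_congr_ae (Filter.Eventually.of_forall hptw)
    _ = ∑ i, ∫ ω, ∑ j, a i ω * b j ω ∂μ :=
        integral_finset_sum _ (fun i _ => integrable_finset_sum _ fun j _ => hint i j)
    _ = ∑ i : Fin m, ∑ j, ∫ ω, a i ω * b j ω ∂μ :=
        Finset.sum_congr rfl fun i _ => integral_finset_sum _ fun j _ => hint i j
    _ = ∑ i : Fin m, (D + ((m:ℝ)-1) * (EA * EB)) := by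
        refine Finset.sum_congr rfl fun i _ => ?_
        rw [← Finset.add_sum_erase _ _ (Finset.mem_univ i), hD i]
        congr 1
        have hval : ∀ j ∈ Finset.univ.erase i, ∫ ω, a i ω * b j ω ∂μ = EA * EB := by
          intro j hj
          have hji : i ≠ j := (Finset.ne_of_mem_erase hj).symm
          have h := (hind i j hji).integral_mul_eq_mul_integral (ha i).aestronglyMeasurable
            (hb j).aestronglyMeasurable
          calc ∫ ω, a i ω * b j ω ∂μ = ∫ ω, (a i * b j) ω ∂μ := rfl
            _ = EA * EB := by rw [show ∫ ω, (a i * b j) ω ∂μ = integral μ (a i * b j) from rfl,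
                h, hA i, hB j]
        rw [Finset.sum_congr rfl hval, Finset.sum_const,
          Finset.card_erase_of_mem (Finset.mem_univ i), Finset.card_univ, Fintype.card_fin,
          nsmul_eq_mul]
        have hm1 : 1 ≤ m := i.pos
        push_cast [Nat.cast_sub hm1]
        ring
    _ = m * D + (m * (m-1)) * (EA * EB) := by
        rw [Finset.sum_const, Finset.card_univ, Fintype.card_fin, nsmul_eq_mul]
        ring

theorem unbiased_c4_g {Ω : Type*} [MeasurableSpace Ω] (μ : Measure Ω) [IsProbabilityMeasure μ]
    (m : ℕ) (hm : 2 ≤ m)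
    (X Y Z W : Fin m → Ω → ℝ)
    (hXmeas : ∀ i, Measurable (X i))
    (hYmeas : ∀ i, Measurable (Y i))
    (hZmeas : ∀ i, Measurable (Z i))
    (hWmeas : ∀ i, Measurable (W i))
    (hindep : iIndepFun (fun i ω => (X i ω, Y i ω, Z i ω, W i ω)) μ)
    (hident : ∀ i, IdentDistrib (fun ω => (X i ω, Y i ω, Z i ω, W i ω)) (fun ω => (X ⟨0, by omega⟩ ω, Y ⟨0, by omega⟩ ω, Z ⟨0, by omega⟩ ω, W ⟨0, by omega⟩ ω)) μ μ)
    (hX4 : MemLp (X ⟨0, by omega⟩) 4 μ)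
    (hY4 : MemLp (Y ⟨0, by omega⟩) 4 μ)
    (hZ4 : MemLp (Z ⟨0, by omega⟩) 4 μ)
    (hW4 : MemLp (W ⟨0, by omega⟩) 4 μ)
    (hEX : (∫ ω, X ⟨0, by omega⟩ ω ∂μ) = 0)
    (hEY : (∫ ω, Y ⟨0, by omega⟩ ω ∂μ) = 0)
    (hEZ : (∫ ω, Z ⟨0, by omega⟩ ω ∂μ) = 0) :
    (∫ ω, (((m:ℝ)+3) * ((m:ℝ)⁻¹ * ∑ i, X i ω * Y i ω * Z i ω * W i ω) - (m:ℝ) * (((m:ℝ)⁻¹ * ∑ i, X i ω * Y i ω * Z i ω) * ((m:ℝ)⁻¹ * ∑ i, W i ω) + ((m:ℝ)⁻¹ * ∑ i, X i ω * Y i ω) * ((m:ℝ)⁻¹ * ∑ i, Z i ω * W i ω) + ((m:ℝ)⁻¹ * ∑ i, X i ω * Z i ω) * ((m:ℝ)⁻¹ * ∑ i, Y i ω * W i ω) + ((m:ℝ)⁻¹ * ∑ i, X i ω * W i ω) * ((m:ℝ)⁻¹ * ∑ i, Y i ω * Z i ω))) / ((m:ℝ)-1) ∂μ) = (∫ ω,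 X ⟨0, by omega⟩ ω * Y ⟨0, by omega⟩ ω * Z ⟨0, by omega⟩ ω * W ⟨0, by omega⟩ ω ∂μ) - (∫ ω, X ⟨0, by omega⟩ ω * Y ⟨0, by omega⟩ ω * Z ⟨0, by omega⟩ ω ∂μ) * (∫ ω, W ⟨0, by omega⟩ ω ∂μ) - (∫ ω, X ⟨0, by omega⟩ ω * Y ⟨0, by omega⟩ ω ∂μ) * (∫ ω, Z ⟨0, by omega⟩ ω * W ⟨0, by omega⟩ ω ∂μ) - (∫ ω, X ⟨0, by omega⟩ ω * Z ⟨0, by omega⟩ ω ∂μ) * (∫ ω, Y ⟨0, by omega⟩ ω * W ⟨0, by omega⟩ ω ∂μ) - (∫ ω, X ⟨0, by omega⟩ ω * W ⟨0, by omega⟩ ω ∂μ) * (∫ ω, Y ⟨0, by omega⟩ ω * Z ⟨0, by omega⟩ ω ∂μ) ∧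
    (∫ ω, X ⟨0, by omega⟩ ω * Y ⟨0, by omega⟩ ω * Z ⟨0, by omega⟩ ω * W ⟨0, by omega⟩ ω ∂μ) - (∫ ω, X ⟨0, by omega⟩ ω * Y ⟨0, by omega⟩ ω * Z ⟨0, by omega⟩ ω ∂μ) * (∫ ω, W ⟨0, by omega⟩ ω ∂μ) - (∫ ω, X ⟨0, by omega⟩ ω * Y ⟨0, by omega⟩ ω ∂μ) * (∫ ω, Z ⟨0, by omega⟩ ω * W ⟨0, by omega⟩ ω ∂μ) - (∫ ω, X ⟨0, by omega⟩ ω * Z ⟨0, by omega⟩ ω ∂μ) * (∫ ω, Y ⟨0, by omega⟩ ω * W ⟨0, by omega⟩ ω ∂μ) - (∫ ω, X ⟨0, by omega⟩ ω * W ⟨0, by omega⟩ ω ∂μ) * (∫ ω, Y ⟨0, by omega⟩ ω * Z ⟨0, by omega⟩ ω ∂μ) = (∫ ω, X ⟨0, by omega⟩ ω * Y ⟨0, by omega⟩ ω * Z ⟨0, by omega⟩ ω * W ⟨0, by omega⟩ ω ∂μ) - (∫ ω, X ⟨0, by omega⟩ ω * Y ⟨0, by omega⟩ ω * Z ⟨0,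 by omega⟩ ω ∂μ) * (∫ ω, W ⟨0, by omega⟩ ω ∂μ) - (∫ ω, X ⟨0, by omega⟩ ω * Y ⟨0, by omega⟩ ω * W ⟨0, by omega⟩ ω ∂μ) * (∫ ω, Z ⟨0, by omega⟩ ω ∂μ) - (∫ ω, X ⟨0, by omega⟩ ω * Z ⟨0, by omega⟩ ω * W ⟨0, by omega⟩ ω ∂μ) * (∫ ω, Y ⟨0, by omega⟩ ω ∂μ) - (∫ ω, Y ⟨0, by omega⟩ ω * Z ⟨0, by omega⟩ ω * W ⟨0, by omega⟩ ω ∂μ) * (∫ ω, X ⟨0, by omega⟩ ω ∂μ) - (∫ ω, X ⟨0, by omega⟩ ω * Y ⟨0, by omega⟩ ω ∂μ) * (∫ ω, Z ⟨0, by omega⟩ ω * W ⟨0, by omega⟩ ω ∂μ) - (∫ ω, X ⟨0, by omega⟩ ω * Z ⟨0, by omega⟩ ω ∂μ) * (∫ ω, Y ⟨0, by omega⟩ ω * W ⟨0, by omega⟩ ω ∂μ) - (∫ ω, X ⟨0, by omega⟩ ω * W ⟨0, by omega⟩ ω ∂μ) * (∫ ω, Y ⟨0, by omega⟩ ω * Z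 ⟨0, by omega⟩ ω ∂μ) + 2 * (∫ ω, X ⟨0, by omega⟩ ω * Y ⟨0, by omega⟩ ω ∂μ) * (∫ ω, Z ⟨0, by omega⟩ ω ∂μ) * (∫ ω, W ⟨0, by omega⟩ ω ∂μ) + 2 * (∫ ω, X ⟨0, by omega⟩ ω * Z ⟨0, by omega⟩ ω ∂μ) * (∫ ω, Y ⟨0, by omega⟩ ω ∂μ) * (∫ ω, W ⟨0, by omega⟩ ω ∂μ) + 2 * (∫ ω, X ⟨0, by omega⟩ ω * W ⟨0, by omega⟩ ω ∂μ) * (∫ ω, Y ⟨0, by omega⟩ ω ∂μ) * (∫ ω, Z ⟨0, by omega⟩ ω ∂μ) + 2 * (∫ ω, Y ⟨0, by omega⟩ ω * Z ⟨0, by omega⟩ ω ∂μ) * (∫ ω, X ⟨0, by omega⟩ ω ∂μ) * (∫ ω, W ⟨0, by omega⟩ ω ∂μ) + 2 * (∫ ω, Y ⟨0, by omega⟩ ω * W ⟨0, by omega⟩ ω ∂μ) * (∫ ω, X ⟨0, by omega⟩ ω ∂μ) * (∫ ω, Z ⟨0, by omega⟩ ω ∂μ) + 2 * (∫ ω, Z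 ⟨0, by omega⟩ ω * W ⟨0, by omega⟩ ω ∂μ) * (∫ ω, X ⟨0, by omega⟩ ω ∂μ) * (∫ ω, Y ⟨0, by omega⟩ ω ∂μ) - 6 * (∫ ω, X ⟨0, by omega⟩ ω ∂μ) * (∫ ω, Y ⟨0, by omega⟩ ω ∂μ) * (∫ ω, Z ⟨0, by omega⟩ ω ∂μ) * (∫ ω, W ⟨0, by omega⟩ ω ∂μ) := by
  constructor
  · -- main unbiasedness computation
    have hm0 : (m:ℝ) ≠ 0 := Nat.cast_ne_zero.mpr (by omega)
    have hm2 : (2:ℝ) ≤ (m:ℝ) := by exact_mod_cast hm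
    have hm1 : (m:ℝ) - 1 ≠ 0 := by linarith
    -- generic transfer lemmas
    have hId : ∀ (φ : ℝ×ℝ×ℝ×ℝ → ℝ), Measurable φ → ∀ i : Fin m,
        IdentDistrib (fun ω => φ (X i ω, Y i ω, Z i ω, W i ω))
          (fun ω => φ (X ⟨0, by omega⟩ ω, Y ⟨0, by omega⟩ ω, Z ⟨0, by omega⟩ ω, W ⟨0, by omega⟩ ω)) μ μ :=
      fun φ hφ i => (hident i).comp hφ
    have hIndC : ∀ (φ ψ : ℝ×ℝ×ℝ×ℝ → ℝ), Measurable φ → Measurable ψ →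
        ∀ i j : Fin m, i ≠ j → IndepFun (fun ω => φ (X i ω, Y i ω, Z i ω, W i ω))
          (fun ω => ψ (X j ω, Y j ω, Z j ω, W j ω)) μ :=
      fun φ ψ hφ hψ i j hij => (hindep.indepFun hij).comp hφ hψ
    -- MemLp 4 for all indices
    have hX4' : ∀ i, MemLp (X i) 4 μ :=
      fun i => ((hId (fun p => p.1) (by fun_prop) i).symm.memLp_snd hX4)
    have hY4' : ∀ i, MemLp (Y i) 4 μ :=
      fun i => ((hId (fun p => p.2.1) (by fun_prop) i).symm.memLp_snd hY4)
    have hZ4' : ∀ i, MemLp (Z i) 4 μ :=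
      fun i => ((hId (fun p => p.2.2.1) (by fun_prop) i).symm.memLp_snd hZ4)
    have hW4' : ∀ i, MemLp (W i) 4 μ :=
      fun i => ((hId (fun p => p.2.2.2) (by fun_prop) i).symm.memLp_snd hW4)
    have h24 : (2:ℝ≥0∞) ≤ 4 := by norm_num
    have h14 : (1:ℝ≥0∞) ≤ 4 := by norm_num
    have hX2 : ∀ i, MemLp (X i) 2 μ := fun i => (hX4' i).mono_exponent h24
    have hY2 : ∀ i, MemLp (Y i) 2 μ := fun i => (hY4' i).mono_exponent h24
    have hZ2 : ∀ i, MemLp (Z i) 2 μ := fun i => (hZ4' i).mono_exponent h24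
    have hW2 : ∀ i, MemLp (W i) 2 μ := fun i => (hW4' i).mono_exponent h24
    -- L² pair products
    have hXY2 : ∀ i, MemLp (fun ω => X i ω * Y i ω) 2 μ := fun i => mem2_of_mem4 (hX4' i) (hY4' i)
    have hXZ2 : ∀ i, MemLp (fun ω => X i ω * Z i ω) 2 μ := fun i => mem2_of_mem4 (hX4' i) (hZ4' i)
    have hXW2 : ∀ i, MemLp (fun ω => X i ω * W i ω) 2 μ := fun i => mem2_of_mem4 (hX4' i) (hW4' i)
    have hYZ2 : ∀ i, MemLp (fun ω => Y i ω * Z i ω) 2 μ := fun i => mem2_of_mem4 (hY4' i) (hZ4' i)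
    have hYW2 : ∀ i, MemLp (fun ω => Y i ω * W i ω) 2 μ := fun i => mem2_of_mem4 (hY4' i) (hW4' i)
    have hZW2 : ∀ i, MemLp (fun ω => Z i ω * W i ω) 2 μ := fun i => mem2_of_mem4 (hZ4' i) (hW4' i)
    -- integrabilities
    have hIX : ∀ i, Integrable (X i) μ :=
      fun i => memLp_one_iff_integrable.mp ((hX4' i).mono_exponent h14)
    have hIY : ∀ i, Integrable (Y i) μ :=
      fun i => memLp_one_iff_integrable.mp ((hY4' i).mono_exponent h14)
    have hIZ : ∀ i, Integrable (Z i) μ :=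
      fun i => memLp_one_iff_integrable.mp ((hZ4' i).mono_exponent h14)
    have hIW : ∀ i, Integrable (W i) μ :=
      fun i => memLp_one_iff_integrable.mp ((hW4' i).mono_exponent h14)
    have hIXY : ∀ i, Integrable (fun ω => X i ω * Y i ω) μ :=
      fun i => int_of_mem2 (hX2 i) (hY2 i)
    have hIXZ : ∀ i, Integrable (fun ω => X i ω * Z i ω) μ :=
      fun i => int_of_mem2 (hX2 i) (hZ2 i)
    have hIXW : ∀ i, Integrable (fun ω => X i ω * W i ω) μ :=
      fun i => int_of_mem2 (hX2 i) (hW2 i)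
    have hIYZ : ∀ i, Integrable (fun ω => Y i ω * Z i ω) μ :=
      fun i => int_of_mem2 (hY2 i) (hZ2 i)
    have hIYW : ∀ i, Integrable (fun ω => Y i ω * W i ω) μ :=
      fun i => int_of_mem2 (hY2 i) (hW2 i)
    have hIZW : ∀ i, Integrable (fun ω => Z i ω * W i ω) μ :=
      fun i => int_of_mem2 (hZ2 i) (hW2 i)
    have hIXYZ : ∀ i, Integrable (fun ω => X i ω * Y i ω * Z i ω) μ :=
      fun i => int_of_mem2 (hXY2 i) (hZ2 i)
    have hIXYZW : ∀ i, Integrable (fun ω => X i ω * Y i ω * Z i ω * W i ω) μ := by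
      intro i
      exact (int_of_mem2 (hXY2 i) (hZW2 i)).congr
        (Filter.Eventually.of_forall fun ω => by ring)
    -- integral values
    have hE4 : ∀ i, ∫ ω, X i ω * Y i ω * Z i ω * W i ω ∂μ =
        ∫ ω, X ⟨0, by omega⟩ ω * Y ⟨0, by omega⟩ ω * Z ⟨0, by omega⟩ ω * W ⟨0, by omega⟩ ω ∂μ :=
      fun i => (hId (fun p => p.1 * p.2.1 * p.2.2.1 * p.2.2.2) (by fun_prop) i).integral_eq
    have hEA1 : ∀ i, ∫ ω, X i ω * Y i ω * Z i ω ∂μ =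
        ∫ ω, X ⟨0, by omega⟩ ω * Y ⟨0, by omega⟩ ω * Z ⟨0, by omega⟩ ω ∂μ :=
      fun i => (hId (fun p => p.1 * p.2.1 * p.2.2.1) (by fun_prop) i).integral_eq
    have hEB1 : ∀ i, ∫ ω, W i ω ∂μ = ∫ ω, W ⟨0, by omega⟩ ω ∂μ :=
      fun i => (hId (fun p => p.2.2.2) (by fun_prop) i).integral_eq
    have hEA2 : ∀ i, ∫ ω, X i ω * Y i ω ∂μ = ∫ ω, X ⟨0, by omega⟩ ω * Y ⟨0, by omega⟩ ω ∂μ :=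
      fun i => (hId (fun p => p.1 * p.2.1) (by fun_prop) i).integral_eq
    have hEB2 : ∀ i, ∫ ω, Z i ω * W i ω ∂μ = ∫ ω, Z ⟨0, by omega⟩ ω * W ⟨0, by omega⟩ ω ∂μ :=
      fun i => (hId (fun p => p.2.2.1 * p.2.2.2) (by fun_prop) i).integral_eq
    have hEA3 : ∀ i, ∫ ω, X i ω * Z i ω ∂μ = ∫ ω, X ⟨0, by omega⟩ ω * Z ⟨0, by omega⟩ ω ∂μ :=
      fun i => (hId (fun p => p.1 * p.2.2.1) (by fun_prop) i).integral_eq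
    have hEB3 : ∀ i, ∫ ω, Y i ω * W i ω ∂μ = ∫ ω, Y ⟨0, by omega⟩ ω * W ⟨0, by omega⟩ ω ∂μ :=
      fun i => (hId (fun p => p.2.1 * p.2.2.2) (by fun_prop) i).integral_eq
    have hEA4 : ∀ i, ∫ ω, X i ω * W i ω ∂μ = ∫ ω, X ⟨0, by omega⟩ ω * W ⟨0, by omega⟩ ω ∂μ :=
      fun i => (hId (fun p => p.1 * p.2.2.2) (by fun_prop) i).integral_eq
    have hEB4 : ∀ i, ∫ ω, Y i ω * Z i ω ∂μ = ∫ ω, Y ⟨0, by omega⟩ ω * Z ⟨0, by omega⟩ ω ∂μ :=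
      fun i => (hId (fun p => p.2.1 * p.2.2.1) (by fun_prop) i).integral_eq
    set E4 := ∫ ω, X ⟨0, by omega⟩ ω * Y ⟨0, by omega⟩ ω * Z ⟨0, by omega⟩ ω * W ⟨0, by omega⟩ ω ∂μ with hE4def
    set A1 := ∫ ω, X ⟨0, by omega⟩ ω * Y ⟨0, by omega⟩ ω * Z ⟨0, by omega⟩ ω ∂μ with hA1def
    set B1 := ∫ ω, W ⟨0, by omega⟩ ω ∂μ with hB1def
    set A2 := ∫ ω, X ⟨0, by omega⟩ ω * Y ⟨0, by omega⟩ ω ∂μ with hA2def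
    set B2 := ∫ ω, Z ⟨0, by omega⟩ ω * W ⟨0, by omega⟩ ω ∂μ with hB2def
    set A3 := ∫ ω, X ⟨0, by omega⟩ ω * Z ⟨0, by omega⟩ ω ∂μ with hA3def
    set B3 := ∫ ω, Y ⟨0, by omega⟩ ω * W ⟨0, by omega⟩ ω ∂μ with hB3def
    set A4 := ∫ ω, X ⟨0, by omega⟩ ω * W ⟨0, by omega⟩ ω ∂μ with hA4def
    set B4 := ∫ ω, Y ⟨0, by omega⟩ ω * Z ⟨0, by omega⟩ ω ∂μ with hB4def
    -- the four double-sum computations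
    obtain ⟨hIP1, hEP1⟩ := key_sum (μ := μ) (a := fun i ω => X i ω * Y i ω * Z i ω) (b := W)
      (D := E4) (EA := A1) (EB := B1) hIXYZW hIXYZ hIW
      (fun i j hij => hIndC (fun p => p.1 * p.2.1 * p.2.2.1) (fun p => p.2.2.2)
        (by fun_prop) (by fun_prop) i j hij)
      hE4 hEA1 hEB1
    obtain ⟨hIP2, hEP2⟩ := key_sum (μ := μ) (a := fun i ω => X i ω * Y i ω)
      (b := fun i ω => Z i ω * W i ω) (D := E4) (EA := A2) (EB := B2)
      (fun i => (hIXYZW i).congr (Filter.Eventually.of_forall fun ω => by ring))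
      hIXY hIZW
      (fun i j hij => hIndC (fun p => p.1 * p.2.1) (fun p => p.2.2.1 * p.2.2.2)
        (by fun_prop) (by fun_prop) i j hij)
      (fun i => by
        rw [show (∫ ω, (X i ω * Y i ω) * (Z i ω * W i ω) ∂μ)
            = ∫ ω, X i ω * Y i ω * Z i ω * W i ω ∂μ from
          integral_congr_ae (Filter.Eventually.of_forall fun ω => by ring)]
        exact hE4 i)
      hEA2 hEB2
    obtain ⟨hIP3, hEP3⟩ := key_sum (μ := μ) (a := fun i ω => X i ω * Z i ω)
      (b := fun i ω => Y i ω * W i ω) (D := E4) (EA := A3) (EB := B3)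
      (fun i => (hIXYZW i).congr (Filter.Eventually.of_forall fun ω => by ring))
      hIXZ hIYW
      (fun i j hij => hIndC (fun p => p.1 * p.2.2.1) (fun p => p.2.1 * p.2.2.2)
        (by fun_prop) (by fun_prop) i j hij)
      (fun i => by
        rw [show (∫ ω, (X i ω * Z i ω) * (Y i ω * W i ω) ∂μ)
            = ∫ ω, X i ω * Y i ω * Z i ω * W i ω ∂μ from
          integral_congr_ae (Filter.Eventually.of_forall fun ω => by ring)]
        exact hE4 i)
      hEA3 hEB3
    obtain ⟨hIP4, hEP4⟩ := key_sum (μ := μ) (a := fun i ω => X i ω * W i ω)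
      (b := fun i ω => Y i ω * Z i ω) (D := E4) (EA := A4) (EB := B4)
      (fun i => (hIXYZW i).congr (Filter.Eventually.of_forall fun ω => by ring))
      hIXW hIYZ
      (fun i j hij => hIndC (fun p => p.1 * p.2.2.2) (fun p => p.2.1 * p.2.2.1)
        (by fun_prop) (by fun_prop) i j hij)
      (fun i => by
        rw [show (∫ ω, (X i ω * W i ω) * (Y i ω * Z i ω) ∂μ)
            = ∫ ω, X i ω * Y i ω * Z i ω * W i ω ∂μ from
          integral_congr_ae (Filter.Eventually.of_forall fun ω => by ring)]
        exact hE4 i)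
      hEA4 hEB4
    -- restate in clean form
    have hIP1' : Integrable (fun ω => (∑ i, X i ω * Y i ω * Z i ω) * (∑ i, W i ω)) μ := hIP1
    have hIP2' : Integrable (fun ω => (∑ i, X i ω * Y i ω) * (∑ i, Z i ω * W i ω)) μ := hIP2
    have hIP3' : Integrable (fun ω => (∑ i, X i ω * Z i ω) * (∑ i, Y i ω * W i ω)) μ := hIP3
    have hIP4' : Integrable (fun ω => (∑ i, X i ω * W i ω) * (∑ i, Y i ω * Z i ω)) μ := hIP4
    have hEP1' : ∫ ω, (∑ i, X i ω * Y i ω * Z i ω) * (∑ i, W i ω) ∂μ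
        = m * E4 + (m * (m-1)) * (A1 * B1) := hEP1
    have hEP2' : ∫ ω, (∑ i, X i ω * Y i ω) * (∑ i, Z i ω * W i ω) ∂μ
        = m * E4 + (m * (m-1)) * (A2 * B2) := hEP2
    have hEP3' : ∫ ω, (∑ i, X i ω * Z i ω) * (∑ i, Y i ω * W i ω) ∂μ
        = m * E4 + (m * (m-1)) * (A3 * B3) := hEP3
    have hEP4' : ∫ ω, (∑ i, X i ω * W i ω) * (∑ i, Y i ω * Z i ω) ∂μ
        = m * E4 + (m * (m-1)) * (A4 * B4) := hEP4
    have hIP0 : Integrable (fun ω => ∑ i, X i ω * Y i ω * Z i ω * W i ω) μ :=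
      integrable_finset_sum _ (fun i _ => hIXYZW i)
    have hEP0 : ∫ ω, ∑ i, X i ω * Y i ω * Z i ω * W i ω ∂μ = m * E4 := by
      rw [integral_finset_sum _ (fun i _ => hIXYZW i)]
      rw [Finset.sum_congr rfl (fun i _ => hE4 i), Finset.sum_const, Finset.card_univ,
        Fintype.card_fin, nsmul_eq_mul]
    -- rewrite the integrand as a linear combination
    have hrw : (fun ω => (((m:ℝ)+3) * ((m:ℝ)⁻¹ * ∑ i, X i ω * Y i ω * Z i ω * W i ω) - (m:ℝ) * (((m:ℝ)⁻¹ * ∑ i, X i ω * Y i ω * Z i ω) * ((m:ℝ)⁻¹ * ∑ i, W i ω) + ((m:ℝ)⁻¹ * ∑ i, X i ω * Y i ω) * ((m:ℝ)⁻¹ * ∑ i, Z i ω * W i ω) + ((m:ℝ)⁻¹ * ∑ i, X i ω * Z i ω) * ((m:ℝ)⁻¹ * ∑ i, Y i ω * W i ω) + ((m:ℝ)⁻¹ * ∑ i, X i ω * W i ω) * ((m:ℝ)⁻¹ * ∑ i, Y i ω * Z i ω))) / ((m:ℝ)-1))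
        = fun ω => (((m:ℝ)+3)/(((m:ℝ)-1)*(m:ℝ))) * (∑ i, X i ω * Y i ω * Z i ω * W i ω)
          + ((-(1/(((m:ℝ)-1)*(m:ℝ)))) * ((∑ i, X i ω * Y i ω * Z i ω) * (∑ i, W i ω))
          + ((-(1/(((m:ℝ)-1)*(m:ℝ)))) * ((∑ i, X i ω * Y i ω) * (∑ i, Z i ω * W i ω))
          + ((-(1/(((m:ℝ)-1)*(m:ℝ)))) * ((∑ i, X i ω * Z i ω) * (∑ i, Y i ω * W i ω))
          + (-(1/(((m:ℝ)-1)*(m:ℝ)))) * ((∑ i, X i ω * W i ω) * (∑ i, Y i ω * Z i ω))))) := by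
      funext ω
      field_simp
      ring
    have hJ4 : Integrable (fun ω => (-(1/(((m:ℝ)-1)*(m:ℝ)))) * ((∑ i, X i ω * W i ω) * (∑ i, Y i ω * Z i ω))) μ := by
      exact hIP4'.const_mul _
    have hJ3 : Integrable (fun ω => (-(1/(((m:ℝ)-1)*(m:ℝ)))) * ((∑ i, X i ω * Z i ω) * (∑ i, Y i ω * W i ω))
        + (-(1/(((m:ℝ)-1)*(m:ℝ)))) * ((∑ i, X i ω * W i ω) * (∑ i, Y i ω * Z i ω))) μ := by
      exact (hIP3'.const_mul _).add hJ4
    have hJ2 : Integrable (fun ω => (-(1/(((m:ℝ)-1)*(m:ℝ)))) * ((∑ i, X i ω * Y i ω) * (∑ i, Z i ω * W i ω))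
        + ((-(1/(((m:ℝ)-1)*(m:ℝ)))) * ((∑ i, X i ω * Z i ω) * (∑ i, Y i ω * W i ω))
        + (-(1/(((m:ℝ)-1)*(m:ℝ)))) * ((∑ i, X i ω * W i ω) * (∑ i, Y i ω * Z i ω)))) μ := by
      exact (hIP2'.const_mul _).add hJ3
    have hJ1 : Integrable (fun ω => (-(1/(((m:ℝ)-1)*(m:ℝ)))) * ((∑ i, X i ω * Y i ω * Z i ω) * (∑ i, W i ω))
        + ((-(1/(((m:ℝ)-1)*(m:ℝ)))) * ((∑ i, X i ω * Y i ω) * (∑ i, Z i ω * W i ω))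
        + ((-(1/(((m:ℝ)-1)*(m:ℝ)))) * ((∑ i, X i ω * Z i ω) * (∑ i, Y i ω * W i ω))
        + (-(1/(((m:ℝ)-1)*(m:ℝ)))) * ((∑ i, X i ω * W i ω) * (∑ i, Y i ω * Z i ω))))) μ := by
      exact (hIP1'.const_mul _).add hJ2
    rw [hrw]
    rw [integral_add (hIP0.const_mul _) hJ1,
      integral_add (hIP1'.const_mul _) hJ2,
      integral_add (hIP2'.const_mul _) hJ3,
      integral_add (hIP3'.const_mul _) hJ4,
      integral_const_mul, integral_const_mul, integral_const_mul, integral_const_mul,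
      integral_const_mul, hEP0, hEP1', hEP2', hEP3', hEP4']
    field_simp
    ring
  · rw [hEX, hEY, hEZ]; ring
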